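/- Both ∏_{|λ|=n} P(λ) and ∏_{|λ|=n} F(λ) are equal to ∏_{i>0} i^{Σ_{j>0} p(n−ij)}, where p denotes the partition function (with p(m) = 0 for m < 0). -/
import Mathlib

/-- `P(λ) = ∏_k k^{i_k}`, the product of all parts of the partition. -/
def partitionP {n : ℕ} (l : Nat.Partition n) : ℕ := l.parts.prod

/-- `F(λ) = ∏_k (i_k)!`, the product of factorials of the multiplicities. -/
def partitionF {n : ℕ} (l : Nat.Partition n) : ℕ :=
  ∏ k ∈ l.parts.toFinset, Nat.factorial (l.parts.count k)

/-- the partition function `p(m)` -/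
def partitionFun (m : ℕ) : ℕ := Fintype.card (Nat.Partition m)

section aux

open Finset

/-- removing `j` copies of `i` is a bijection -/
def removeEquiv (n i j : ℕ) (hi : 1 ≤ i) (h : i * j ≤ n) :
    {l : Nat.Partition n // j ≤ l.parts.count i} ≃ Nat.Partition (n - i * j) where
  toFun := fun ⟨l, hl⟩ =>
    { parts := l.parts - Multiset.replicate j i
      parts_pos := fun hp => l.parts_pos (Multiset.mem_of_le (tsub_le_self) hp)
      parts_sum := by
        have hle : Multiset.replicate j i ≤ l.parts :=
          Multiset.le_count_iff_replicate_le.mp hl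
        have h1 : (l.parts - Multiset.replicate j i) + Multiset.replicate j i = l.parts :=
          tsub_add_cancel_of_le hle
        have h2 : (l.parts - Multiset.replicate j i).sum + (Multiset.replicate j i).sum
            = l.parts.sum := by rw [← Multiset.sum_add, h1]
        rw [l.parts_sum, Multiset.sum_replicate, smul_eq_mul] at h2
        have hc : j * i = i * j := Nat.mul_comm j i
        omega }
  invFun := fun m =>
    ⟨{ parts := m.parts + Multiset.replicate j i
       parts_pos := fun hp => by
         rcases Multiset.mem_add.mp hp with hp | hp
         · exact m.parts_pos hp
         · rw [Multiset.eq_of_mem_replicate hp]; omega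
       parts_sum := by
         rw [Multiset.sum_add, m.parts_sum, Multiset.sum_replicate, smul_eq_mul]
         have hc : j * i = i * j := Nat.mul_comm j i
         omega },
     by simp [Multiset.count_replicate]⟩
  left_inv := fun ⟨l, hl⟩ => Subtype.ext (Nat.Partition.ext
    (tsub_add_cancel_of_le (Multiset.le_count_iff_replicate_le.mp hl)))
  right_inv := fun m => by
    apply Nat.Partition.ext
    exact add_tsub_cancel_right _ _

lemma card_count_ge (n i j : ℕ) (hi : 1 ≤ i) (hj : 1 ≤ j) :
    (Finset.univ.filter (fun l : Nat.Partition n => j ≤ l.parts.count i)).card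
      = if i * j ≤ n then partitionFun (n - i * j) else 0 := by
  rw [← Fintype.card_subtype]
  split_ifs with h
  · rw [Fintype.card_congr (removeEquiv n i j hi h)]; rfl
  · rw [Fintype.card_eq_zero_iff]
    constructor
    rintro ⟨l, hl⟩
    have hle : Multiset.replicate j i ≤ l.parts :=
      Multiset.le_count_iff_replicate_le.mp hl
    obtain ⟨u, hu⟩ := Multiset.le_iff_exists_add.mp hle
    have hsum : (Multiset.replicate j i).sum + u.sum = n := by
      rw [← Multiset.sum_add, ← hu, l.parts_sum]
    rw [Multiset.sum_replicate, smul_eq_mul] at hsum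
    have hc : j * i = i * j := Nat.mul_comm j i
    omega

variable {n : ℕ}

lemma count_le (l : Nat.Partition n) (i : ℕ) (hi : 1 ≤ i) : l.parts.count i ≤ n := by
  calc l.parts.count i ≤ l.parts.card := Multiset.count_le_card _ _
    _ ≤ l.parts.sum := by
        have := Multiset.sum_map_le_sum_map (fun _ => 1) id
          (fun x hx => l.parts_pos hx)
        simpa using this
    _ = n := l.parts_sum

lemma toFinset_subset_Icc (hn : 0 < n) (l : Nat.Partition n) :
    l.parts.toFinset ⊆ Finset.Icc 1 n := by
  intro k hk
  rw [Multiset.mem_toFinset] at hk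
  rw [Finset.mem_Icc]
  refine ⟨l.parts_pos hk, ?_⟩
  calc k ≤ l.parts.sum := Multiset.single_le_sum (fun x _ => Nat.zero_le x) _ hk
    _ = n := l.parts_sum

/-- the exponent sum -/
lemma sum_count_eq (hn : 0 < n) (i : ℕ) (hi : i ∈ Finset.Icc 1 n) :
    (∑ l : Nat.Partition n, l.parts.count i)
      = ∑ j ∈ Finset.Icc 1 n, if i * j ≤ n then partitionFun (n - i * j) else 0 := by
  rw [Finset.mem_Icc] at hi
  have step1 : ∀ l : Nat.Partition n,
      l.parts.count i = ∑ j ∈ Finset.Icc 1 n, if j ≤ l.parts.count i then 1 else 0 := by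
    intro l
    rw [← Finset.sum_filter]
    have hf : Finset.filter (fun j => j ≤ l.parts.count i) (Finset.Icc 1 n)
        = Finset.Icc 1 (l.parts.count i) := by
      ext j
      simp only [Finset.mem_filter, Finset.mem_Icc]
      have := count_le l i hi.1
      omega
    rw [hf, Finset.sum_const, Nat.card_Icc, smul_eq_mul, mul_one]
    omega
  rw [Finset.sum_congr rfl fun l _ => step1 l]
  rw [Finset.sum_comm]
  refine Finset.sum_congr rfl fun j hj => ?_
  rw [Finset.mem_Icc] at hj
  rw [← Finset.sum_filter, Finset.sum_const, smul_eq_mul, mul_one]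
  exact card_count_ge n i j hi.1 hj.1

end aux

set_option maxHeartbeats 1000000 in
theorem prod_P_and_prod_F_eq (n : ℕ) (hn : 0 < n) :
    (∏ l : Nat.Partition n, partitionP l)
      = ∏ i ∈ Finset.Icc 1 n,
          i ^ (∑ j ∈ Finset.Icc 1 n, if i * j ≤ n then partitionFun (n - i * j) else 0) ∧
    (∏ l : Nat.Partition n, partitionF l)
      = ∏ i ∈ Finset.Icc 1 n,
          i ^ (∑ j ∈ Finset.Icc 1 n, if i * j ≤ n then partitionFun (n - i * j) else 0) := by
  constructor
  · calc ∏ l : Nat.Partition n, partitionP l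
        = ∏ l : Nat.Partition n, ∏ k ∈ Finset.Icc 1 n, k ^ l.parts.count k := by
          refine Finset.prod_congr rfl fun l _ => ?_
          rw [partitionP, Finset.prod_multiset_count]
          refine Finset.prod_subset (toFinset_subset_Icc hn l) fun k _ hk => ?_
          rw [Multiset.count_eq_zero_of_notMem (by simpa using hk)]
          rfl
      _ = ∏ k ∈ Finset.Icc 1 n, ∏ l : Nat.Partition n, k ^ l.parts.count k :=
          Finset.prod_comm
      _ = ∏ k ∈ Finset.Icc 1 n, k ^ (∑ l : Nat.Partition n, l.parts.count k) := by
          refine Finset.prod_congr rfl fun k _ => ?_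
          exact Finset.prod_pow_eq_pow_sum _ _ _
      _ = _ := Finset.prod_congr rfl fun k hk => by rw [sum_count_eq hn k hk]
  · calc ∏ l : Nat.Partition n, partitionF l
        = ∏ l : Nat.Partition n, ∏ k ∈ Finset.Icc 1 n,
            ∏ j ∈ Finset.Icc 1 n, (if j ≤ l.parts.count k then j else 1) := by
          refine Finset.prod_congr rfl fun l _ => ?_
          rw [partitionF]
          rw [Finset.prod_subset (toFinset_subset_Icc hn l)
            (fun k _ hk => by
              rw [Multiset.count_eq_zero_of_notMem (by simpa using hk)]; rfl)]
          refine Finset.prod_congr rfl fun k hk => ?_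
          rw [Finset.mem_Icc] at hk
          rw [← Finset.prod_filter]
          have : Finset.filter (fun j => j ≤ l.parts.count k) (Finset.Icc 1 n)
              = Finset.Icc 1 (l.parts.count k) := by
            ext j
            simp only [Finset.mem_filter, Finset.mem_Icc]
            have := count_le l k hk.1
            omega
          rw [this, ← Finset.Ico_add_one_right_eq_Icc, Finset.prod_Ico_id_eq_factorial]
      _ = ∏ l : Nat.Partition n, ∏ j ∈ Finset.Icc 1 n,
            ∏ k ∈ Finset.Icc 1 n, (if j ≤ l.parts.count k then j else 1) :=
          Finset.prod_congr rfl fun l _ => Finset.prod_comm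
      _ = ∏ j ∈ Finset.Icc 1 n, ∏ l : Nat.Partition n,
            ∏ k ∈ Finset.Icc 1 n, (if j ≤ l.parts.count k then j else 1) :=
          Finset.prod_comm
      _ = ∏ j ∈ Finset.Icc 1 n, ∏ k ∈ Finset.Icc 1 n,
            ∏ l : Nat.Partition n, (if j ≤ l.parts.count k then j else 1) :=
          Finset.prod_congr rfl fun j _ => Finset.prod_comm
      _ = ∏ j ∈ Finset.Icc 1 n, ∏ k ∈ Finset.Icc 1 n,
            j ^ (if k * j ≤ n then partitionFun (n - k * j) else 0) := by
          refine Finset.prod_congr rfl fun j hj => Finset.prod_congr rfl fun k hk => ?_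
          rw [Finset.mem_Icc] at hj hk
          rw [← Finset.prod_filter, Finset.prod_const]
          rw [card_count_ge n k j hk.1 hj.1]
      _ = _ := by
          refine Finset.prod_congr rfl fun j _ => ?_
          rw [Finset.prod_pow_eq_pow_sum]
          congr 1
          refine Finset.sum_congr rfl fun k _ => ?_
          rw [mul_comm]
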